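/- Let A be a cocommutative Hopf algebra over a field k, f : A → B a Hopf algebra morphism admitting a Hopf algebra section s : B → A (f ∘ s = id_B). Then the map Hker(f) ⊗ B → A sending x ⊗ b to x · s(b) is a linear isomorphism, where Hker(f) = { a ∈ A : a_{(1)} ⊗ f(a_{(2)}) = a ⊗ 1_B }. -/

import Mathlib

open TensorProduct

variable {k A B : Type*} [Field k] [Ring A] [Ring B] [HopfAlgebra k A] [HopfAlgebra k B]

/-- For cocommutative `A`, the Hopf kernel of `f : A → B` is
`Hker f = {a : a₍₁₎ ⊗ f (a₍₂₎) = a ⊗ 1}`. -/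
noncomputable def hopfKer (f : A →ₐc[k] B) : Submodule k A :=
  LinearMap.ker
    (LinearMap.lTensor A f.toLinearMap ∘ₗ Coalgebra.comul - (TensorProduct.mk k A B).flip 1)

/-- The canonical map `Hker f ⊗ B → A`, `x ⊗ b ↦ x * s b`. -/
noncomputable def radfordMap (f : A →ₐc[k] B) (s : B →ₐc[k] A) :
    hopfKer f ⊗[k] B →ₗ[k] A :=
  TensorProduct.lift <| LinearMap.mk₂ k (fun (x : hopfKer f) (b : B) => (x : A) * s b)
    (by intro x y b; simp [add_mul])
    (by intro c x b; simp [smul_mul_assoc])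
    (by intro x b b'; simp [mul_add])
    (by intro c x b; simp [map_smul, mul_smul_comm])

namespace RadfordAux

open Coalgebra HopfAlgebra

section General

variable {C : Type*} [Ring C] [HopfAlgebra k C]

/-- Swapped representation, using cocommutativity. -/
noncomputable def swapRepr (hcc : ∀ a : C, TensorProduct.comm k C C (comul a) = comul a)
    {a : C} {ι : Type*} (r : Coalgebra.Repr k a ι) : Coalgebra.Repr k a ι where
  index := r.index
  left := r.right
  right := r.left
  eq := by
    have h := congrArg (TensorProduct.comm k C C) r.eq
    simp only [map_sum, TensorProduct.comm_tmul, hcc a] at h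
    exact h

/-- The swap of middle two factors in `C ⊗ (C ⊗ (C ⊗ C))`. -/
noncomputable def sigma : (C ⊗[k] (C ⊗[k] (C ⊗[k] C))) →ₗ[k] (C ⊗[k] (C ⊗[k] (C ⊗[k] C))) :=
  LinearMap.lTensor C ((TensorProduct.assoc k C C C).toLinearMap.comp
    ((LinearMap.rTensor C (TensorProduct.comm k C C).toLinearMap).comp
      (TensorProduct.assoc k C C C).symm.toLinearMap))

@[simp] lemma sigma_tmul (x y z w : C) :
    sigma (k := k) (x ⊗ₜ (y ⊗ₜ (z ⊗ₜ w))) = x ⊗ₜ (z ⊗ₜ (y ⊗ₜ w)) := by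
  simp [sigma]

lemma key (hcc : ∀ a : C, TensorProduct.comm k C C (comul a) = comul a)
    {a : C} {ι : Type*} (r : Coalgebra.Repr k a ι)
    (rl : (i : r.ι) → Coalgebra.Repr k (r.left i) (C × C))
    (rr : (i : r.ι) → Coalgebra.Repr k (r.right i) (C × C)) :
    (∑ i ∈ r.index, ∑ l ∈ (rl i).index, ∑ j ∈ (rr i).index,
      (rl i).left l ⊗ₜ[k] ((rl i).right l ⊗ₜ[k] ((rr i).left j ⊗ₜ[k] (rr i).right j)))
    = ∑ i ∈ r.index, ∑ l ∈ (rl i).index, ∑ j ∈ (rr i).index,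
      (rl i).left l ⊗ₜ[k] ((rr i).left j ⊗ₜ[k] ((rl i).right l ⊗ₜ[k] (rr i).right j)) := by
  classical
  let rq : (i : r.ι) → (j : (rr i).ι) → Coalgebra.Repr k ((rr i).right j) (C × C) := fun i j => ℛ k _
  set TB : C ⊗[k] (C ⊗[k] (C ⊗[k] C)) :=
    ∑ i ∈ r.index, ∑ j ∈ (rr i).index, ∑ m ∈ (rq i j).index,
      r.left i ⊗ₜ[k] ((rr i).left j ⊗ₜ[k] ((rq i j).left m ⊗ₜ[k] (rq i j).right m)) with hTB
  have h1 : (∑ i ∈ r.index, ∑ l ∈ (rl i).index, ∑ j ∈ (rr i).index,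
      (rl i).left l ⊗ₜ[k] ((rl i).right l ⊗ₜ[k] ((rr i).left j ⊗ₜ[k] (rr i).right j))) = TB := by
    have E0 := sum_tmul_tmul_eq r rl rr
    have E1 := congrArg (LinearMap.lTensor C (LinearMap.lTensor C (comul (R := k)))) E0
    simp only [map_sum, LinearMap.lTensor_tmul] at E1
    calc (∑ i ∈ r.index, ∑ l ∈ (rl i).index, ∑ j ∈ (rr i).index,
        (rl i).left l ⊗ₜ[k] ((rl i).right l ⊗ₜ[k] ((rr i).left j ⊗ₜ[k] (rr i).right j)))
        = ∑ i ∈ r.index, ∑ l ∈ (rl i).index,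
            (rl i).left l ⊗ₜ[k] ((rl i).right l ⊗ₜ[k] comul (r.right i)) := by
          refine Finset.sum_congr rfl fun i _ => Finset.sum_congr rfl fun l _ => ?_
          rw [← (rr i).eq]
          simp only [tmul_sum]
      _ = TB := by
          rw [E1, hTB]
          refine Finset.sum_congr rfl fun i _ => Finset.sum_congr rfl fun j _ => ?_
          rw [← (rq i j).eq]
          simp only [tmul_sum]
  have h2 : ∀ (rp : (i : r.ι) → (j : (rr i).ι) → Coalgebra.Repr k ((rr i).left j) (C × C)),
      (∑ i ∈ r.index, ∑ j ∈ (rr i).index, ∑ m ∈ (rp i j).index,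
        r.left i ⊗ₜ[k] ((rp i j).left m ⊗ₜ[k] ((rp i j).right m ⊗ₜ[k] (rr i).right j))) = TB := by
    intro rp
    rw [hTB]
    refine Finset.sum_congr rfl fun i _ => ?_
    have E2 := sum_tmul_tmul_eq (rr i) (rp i) (rq i)
    have := congrArg (fun t => (r.left i) ⊗ₜ[k] t) E2
    simpa only [tmul_sum] using this
  let rp : (i : r.ι) → (j : (rr i).ι) → Coalgebra.Repr k ((rr i).left j) (C × C) := fun i j => ℛ k _
  let rp' : (i : r.ι) → (j : (rr i).ι) → Coalgebra.Repr k ((rr i).left j) (C × C) :=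
    fun i j => swapRepr hcc (rp i j)
  have h4 : sigma (k := k) (∑ i ∈ r.index, ∑ l ∈ (rl i).index, ∑ j ∈ (rr i).index,
      (rl i).left l ⊗ₜ[k] ((rl i).right l ⊗ₜ[k] ((rr i).left j ⊗ₜ[k] (rr i).right j)))
      = ∑ i ∈ r.index, ∑ l ∈ (rl i).index, ∑ j ∈ (rr i).index,
      (rl i).left l ⊗ₜ[k] ((rr i).left j ⊗ₜ[k] ((rl i).right l ⊗ₜ[k] (rr i).right j)) := by
    simp only [map_sum, sigma_tmul]
  rw [← h4, h1, ← h2 rp']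
  have h3 : sigma (k := k) (∑ i ∈ r.index, ∑ j ∈ (rr i).index, ∑ m ∈ (rp' i j).index,
      r.left i ⊗ₜ[k] ((rp' i j).left m ⊗ₜ[k] ((rp' i j).right m ⊗ₜ[k] (rr i).right j)))
      = ∑ i ∈ r.index, ∑ j ∈ (rr i).index, ∑ m ∈ (rp i j).index,
      r.left i ⊗ₜ[k] ((rp i j).left m ⊗ₜ[k] ((rp i j).right m ⊗ₜ[k] (rr i).right j)) := by
    simp only [map_sum, sigma_tmul]
    rfl
  rw [h3, h2 rp]
  exact h2 rp'

lemma sum_counit_smul_right {a : C} {ι : Type*} (r : Coalgebra.Repr k a ι) :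
    ∑ i ∈ r.index, counit (R := k) (r.left i) • r.right i = a := by
  have h := congrArg (TensorProduct.lid k C) (sum_counit_tmul_eq r)
  simp only [map_sum, TensorProduct.lid_tmul] at h
  simpa using h

lemma sum_counit_smul_left {a : C} {ι : Type*} (r : Coalgebra.Repr k a ι) :
    ∑ i ∈ r.index, counit (R := k) (r.right i) • r.left i = a := by
  have h := congrArg (TensorProduct.rid k C) (sum_tmul_counit_eq r)
  simp only [map_sum, TensorProduct.rid_tmul] at h
  simpa using h

/-- Convolution product of linear maps from a coalgebra to an algebra. -/
noncomputable def convMul {L : Type*} [Ring L] [Algebra k L] (φ ψ : C →ₗ[k] L) : C →ₗ[k] L :=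
  LinearMap.mul' k L ∘ₗ TensorProduct.map φ ψ ∘ₗ comul

variable {L : Type*} [Ring L] [Algebra k L]

lemma convMul_apply_repr (φ ψ : C →ₗ[k] L) {a : C} {ι : Type*} (r : Coalgebra.Repr k a ι) :
    convMul φ ψ a = ∑ i ∈ r.index, φ (r.left i) * ψ (r.right i) := by
  rw [convMul, LinearMap.comp_apply, LinearMap.comp_apply, ← r.eq]
  simp [map_sum]

lemma convMul_assoc (φ ψ χ : C →ₗ[k] L) :
    convMul (convMul φ ψ) χ = convMul φ (convMul ψ χ) := by
  refine LinearMap.ext fun a => ?_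
  classical
  let r := ℛ k a
  let rl : (i : r.ι) → Coalgebra.Repr k (r.left i) (C × C) := fun i => ℛ k _
  let rr : (i : r.ι) → Coalgebra.Repr k (r.right i) (C × C) := fun i => ℛ k _
  rw [convMul_apply_repr _ _ r, convMul_apply_repr _ _ r]
  have hL : ∀ i, convMul φ ψ (r.left i)
      = ∑ l ∈ (rl i).index, φ ((rl i).left l) * ψ ((rl i).right l) :=
    fun i => convMul_apply_repr _ _ (rl i)
  have hR : ∀ i, convMul ψ χ (r.right i)
      = ∑ j ∈ (rr i).index, ψ ((rr i).left j) * χ ((rr i).right j) :=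
    fun i => convMul_apply_repr _ _ (rr i)
  simp only [hL, hR, Finset.sum_mul, Finset.mul_sum]
  have E := sum_tmul_tmul_eq r rl rr
  have E2 := congrArg (LinearMap.mul' k L ∘ₗ TensorProduct.map φ
    (LinearMap.mul' k L ∘ₗ TensorProduct.map ψ χ)) E
  simpa only [map_sum, LinearMap.comp_apply, TensorProduct.map_tmul, LinearMap.mul'_apply,
    mul_assoc] using E2

lemma convMul_unit_right (φ : C →ₗ[k] L) :
    convMul φ ((Algebra.linearMap k L) ∘ₗ counit) = φ := by
  refine LinearMap.ext fun a => ?_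
  let r := ℛ k a
  rw [convMul_apply_repr _ _ r]
  have : ∀ i, φ (r.left i) * (Algebra.linearMap k L ∘ₗ counit) (r.right i)
      = counit (R := k) (r.right i) • φ (r.left i) := by
    intro i
    simp [Algebra.smul_def, ← Algebra.commutes]
  rw [Finset.sum_congr rfl (fun i _ => this i),
    Finset.sum_congr rfl (fun i _ => (map_smul φ _ _).symm), ← map_sum, sum_counit_smul_left r]

lemma convMul_unit_left (φ : C →ₗ[k] L) :
    convMul ((Algebra.linearMap k L) ∘ₗ counit) φ = φ := by
  refine LinearMap.ext fun a => ?_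
  let r := ℛ k a
  rw [convMul_apply_repr _ _ r]
  have : ∀ i, (Algebra.linearMap k L ∘ₗ counit) (r.left i) * φ (r.right i)
      = counit (R := k) (r.left i) • φ (r.right i) := by
    intro i
    simp [Algebra.smul_def]
  rw [Finset.sum_congr rfl (fun i _ => this i),
    Finset.sum_congr rfl (fun i _ => (map_smul φ _ _).symm), ← map_sum, sum_counit_smul_right r]

lemma comul_antipode (hcc : ∀ a : C, TensorProduct.comm k C C (comul a) = comul a) (c : C) :
    comul (R := k) (antipode (R := k) c)
      = TensorProduct.map (antipode (R := k)) (antipode (R := k)) (comul c) := by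
  classical
  have hFD : convMul ((comul (R := k) (A := C)) ∘ₗ antipode k) comul
      = (Algebra.linearMap k (C ⊗[k] C)) ∘ₗ counit := by
    refine LinearMap.ext fun a => ?_
    let r := ℛ k a
    rw [convMul_apply_repr _ _ r]
    have : ∀ i ∈ r.index, (comul (R := k) ∘ₗ antipode k) (r.left i) * comul (r.right i)
        = comul (R := k) (antipode (R := k) (r.left i) * r.right i) := by
      intro i _; simp
    rw [Finset.sum_congr rfl this, ← map_sum, sum_antipode_mul_eq_algebraMap_counit r]
    simp
  have hDG : convMul (comul (R := k) (A := C))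
        ((TensorProduct.map (antipode (R := k)) (antipode (R := k))) ∘ₗ comul)
      = (Algebra.linearMap k (C ⊗[k] C)) ∘ₗ counit := by
    refine LinearMap.ext fun a => ?_
    let r := ℛ k a
    let rl : (i : r.ι) → Coalgebra.Repr k (r.left i) (C × C) := fun i => ℛ k _
    let rr : (i : r.ι) → Coalgebra.Repr k (r.right i) (C × C) := fun i => ℛ k _
    rw [convMul_apply_repr _ _ r]
    have expand : ∀ i ∈ r.index, comul (R := k) (r.left i) *
        ((TensorProduct.map (antipode (R := k)) (antipode (R := k))) ∘ₗ comul) (r.right i)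
        = ∑ l ∈ (rl i).index, ∑ j ∈ (rr i).index,
          ((rl i).left l * antipode (R := k) ((rr i).left j)) ⊗ₜ[k]
            ((rl i).right l * antipode (R := k) ((rr i).right j)) := by
      intro i _
      rw [LinearMap.comp_apply, ← (rl i).eq, ← (rr i).eq]
      simp [map_sum, Finset.sum_mul_sum, Algebra.TensorProduct.tmul_mul_tmul]
    rw [Finset.sum_congr rfl expand]
    set mS : C ⊗[k] C →ₗ[k] C :=
      LinearMap.mul' k C ∘ₗ LinearMap.lTensor C (antipode (R := k)) with hmS
    have hmS_tmul : ∀ x y : C, mS (x ⊗ₜ[k] y) = x * antipode (R := k) y := by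
      intro x y; simp [hmS]
    set Phi : C ⊗[k] (C ⊗[k] (C ⊗[k] C)) →ₗ[k] C ⊗[k] C :=
      (TensorProduct.map mS mS) ∘ₗ (TensorProduct.assoc k C C (C ⊗[k] C)).symm.toLinearMap
      with hPhi
    have hPhi_tmul : ∀ x y z w : C, Phi (x ⊗ₜ[k] (y ⊗ₜ[k] (z ⊗ₜ[k] w)))
        = (x * antipode (R := k) y) ⊗ₜ[k] (z * antipode (R := k) w) := by
      intro x y z w
      simp [hPhi, hmS_tmul]
    have hk := congrArg Phi (key hcc r rl rr)
    simp only [map_sum, hPhi_tmul] at hk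
    rw [← hk]
    have inner : ∀ i ∈ r.index,
        (∑ l ∈ (rl i).index, ∑ j ∈ (rr i).index,
          ((rl i).left l * antipode (R := k) ((rl i).right l)) ⊗ₜ[k]
            ((rr i).left j * antipode (R := k) ((rr i).right j)))
        = (counit (R := k) (r.left i) * counit (R := k) (r.right i)) •
            ((1 : C) ⊗ₜ[k] (1 : C)) := by
      intro i _
      have : (∑ l ∈ (rl i).index, ∑ j ∈ (rr i).index,
          ((rl i).left l * antipode (R := k) ((rl i).right l)) ⊗ₜ[k]
            ((rr i).left j * antipode (R := k) ((rr i).right j)))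
          = (∑ l ∈ (rl i).index, (rl i).left l * antipode (R := k) ((rl i).right l)) ⊗ₜ[k]
            (∑ j ∈ (rr i).index, (rr i).left j * antipode (R := k) ((rr i).right j)) := by
        rw [TensorProduct.sum_tmul]
        exact Finset.sum_congr rfl fun l _ => (TensorProduct.tmul_sum _ _ _).symm
      rw [this, sum_mul_antipode_eq_algebraMap_counit (rl i), sum_mul_antipode_eq_algebraMap_counit (rr i)]
      simp [Algebra.algebraMap_eq_smul_one, TensorProduct.smul_tmul', smul_smul, mul_comm]
    rw [Finset.sum_congr rfl inner, ← Finset.sum_smul]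
    have hsum : (∑ i ∈ r.index, counit (R := k) (r.left i) * counit (R := k) (r.right i))
        = counit (R := k) a := by
      have h := congrArg (counit (R := k)) (sum_counit_smul_right r)
      simpa [map_sum, smul_eq_mul] using h
    rw [hsum]
    simp [Algebra.TensorProduct.one_def, Algebra.algebraMap_eq_smul_one]
  have main : (comul (R := k) (A := C)) ∘ₗ antipode k
      = (TensorProduct.map (antipode (R := k)) (antipode (R := k))) ∘ₗ comul := by
    calc (comul (R := k) (A := C)) ∘ₗ antipode k
        = convMul ((comul (R := k) (A := C)) ∘ₗ antipode k)
            ((Algebra.linearMap k (C ⊗[k] C)) ∘ₗ counit) := (convMul_unit_right _).symm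
      _ = convMul ((comul (R := k) (A := C)) ∘ₗ antipode k)
            (convMul (comul (R := k) (A := C))
              ((TensorProduct.map (antipode (R := k)) (antipode (R := k))) ∘ₗ comul)) := by
          rw [hDG]
      _ = convMul (convMul ((comul (R := k) (A := C)) ∘ₗ antipode k) comul)
            ((TensorProduct.map (antipode (R := k)) (antipode (R := k))) ∘ₗ comul) :=
          (convMul_assoc _ _ _).symm
      _ = convMul ((Algebra.linearMap k (C ⊗[k] C)) ∘ₗ counit)
            ((TensorProduct.map (antipode (R := k)) (antipode (R := k))) ∘ₗ comul) := by
          rw [hFD]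
      _ = (TensorProduct.map (antipode (R := k)) (antipode (R := k))) ∘ₗ comul :=
          convMul_unit_left _
  exact LinearMap.congr_fun main c

end General

section Main

variable (f : A →ₐc[k] B) (s : B →ₐc[k] A)

lemma comul_bialgHom (φ : A →ₐc[k] B) (a : A) :
    comul (R := k) (φ a) = TensorProduct.map φ.toLinearMap φ.toLinearMap (comul a) :=
  (LinearMap.congr_fun (CoalgHomClass.map_comp_comul φ) a).symm

/-- Image of a representation under a bialgebra morphism. -/
noncomputable def mapRepr (φ : A →ₐc[k] B) {a : A} {ι : Type*} (r : Coalgebra.Repr k a ι) :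
    Coalgebra.Repr k (φ a) ι where
  index := r.index
  left := φ ∘ r.left
  right := φ ∘ r.right
  eq := by
    have h := congrArg (TensorProduct.map φ.toLinearMap φ.toLinearMap) r.eq
    simp only [map_sum, TensorProduct.map_tmul] at h
    rw [comul_bialgHom φ, ← h]
    rfl

/-- Representation of a product built from two representations. -/
noncomputable def mulRepr {x y : A} {ι₁ ι₂ : Type*} (rx : Coalgebra.Repr k x ι₁)
    (ry : Coalgebra.Repr k y ι₂) :
    Coalgebra.Repr k (x * y) (ι₁ × ι₂) where
  index := rx.index ×ˢ ry.index
  left := fun p => rx.left p.1 * ry.left p.2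
  right := fun p => rx.right p.1 * ry.right p.2
  eq := by
    rw [Finset.sum_product, Bialgebra.comul_mul, ← rx.eq, ← ry.eq, Finset.sum_mul_sum]
    simp [Algebra.TensorProduct.tmul_mul_tmul]

lemma sum_f_mul_antipode (φ : A →ₐc[k] B) {a : A} {ι : Type*} (r : Coalgebra.Repr k a ι) :
    ∑ j ∈ r.index, φ (r.left j) * antipode (R := k) (φ (r.right j))
      = algebraMap k B (counit (R := k) a) := by
  have h := sum_mul_antipode_eq_algebraMap_counit (mapRepr φ r)
  simpa [mapRepr, CoalgHomClass.counit_comp_apply] using h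

lemma sum_antipode_f_mul (φ : A →ₐc[k] B) {a : A} {ι : Type*} (r : Coalgebra.Repr k a ι) :
    ∑ j ∈ r.index, antipode (R := k) (φ (r.left j)) * φ (r.right j)
      = algebraMap k B (counit (R := k) a) := by
  have h := sum_antipode_mul_eq_algebraMap_counit (mapRepr φ r)
  simpa [mapRepr, CoalgHomClass.counit_comp_apply] using h

lemma hccB (hcc : ∀ a : A, TensorProduct.comm k A A (comul a) = comul a)
    (hfs : ∀ b, f (s b) = b) (b : B) :
    TensorProduct.comm k B B (comul b) = comul b := by
  have h1 : comul (R := k) b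
      = TensorProduct.map f.toLinearMap f.toLinearMap (comul (s b)) := by
    conv_lhs => rw [← hfs b, comul_bialgHom f]
  have hswap : ∀ x : A ⊗[k] A,
      TensorProduct.comm k B B (TensorProduct.map f.toLinearMap f.toLinearMap x)
        = TensorProduct.map f.toLinearMap f.toLinearMap (TensorProduct.comm k A A x) := by
    intro x
    induction x using TensorProduct.induction_on with
    | zero => simp
    | tmul => simp
    | add u v hu hv => simp only [map_add, hu, hv]
  rw [h1, hswap, hcc]

/-- The map `a ↦ a₍₁₎ * s (S (f a₍₂₎))`. -/
noncomputable def gmap : A →ₗ[k] A :=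
  LinearMap.mul' k A ∘ₗ LinearMap.lTensor A
    (s.toLinearMap ∘ₗ antipode k ∘ₗ f.toLinearMap) ∘ₗ comul

lemma gmap_apply_repr {a : A} {ι : Type*} (r : Coalgebra.Repr k a ι) :
    gmap f s a = ∑ i ∈ r.index, r.left i * s (antipode (R := k) (f (r.right i))) := by
  rw [gmap, LinearMap.comp_apply, LinearMap.comp_apply, ← r.eq]
  simp only [map_sum, LinearMap.lTensor_tmul, LinearMap.mul'_apply, LinearMap.comp_apply,
    BialgHom.coe_toLinearMap, CoalgHom.coe_toLinearMap]
  rfl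

lemma mem_hopfKer_iff {a : A} :
    a ∈ hopfKer f ↔ LinearMap.lTensor A f.toLinearMap (comul (R := k) a) = a ⊗ₜ[k] 1 := by
  simp only [hopfKer, LinearMap.mem_ker, LinearMap.sub_apply, LinearMap.comp_apply,
    sub_eq_zero, TensorProduct.mk_apply, LinearMap.flip_apply]

lemma gmap_mem_hopfKer (hcc : ∀ a : A, TensorProduct.comm k A A (comul a) = comul a)
    (hfs : ∀ b, f (s b) = b) (a : A) : gmap f s a ∈ hopfKer f := by
  classical
  rw [mem_hopfKer_iff]
  let r := ℛ k a
  let rl : (i : r.ι) → Coalgebra.Repr k (r.left i) (A × A) := fun i => ℛ k _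
  let rr : (i : r.ι) → Coalgebra.Repr k (r.right i) (A × A) := fun i => ℛ k _
  have hcg : comul (R := k) (gmap f s a)
      = ∑ i ∈ r.index, ∑ l ∈ (rl i).index, ∑ j ∈ (rr i).index,
          ((rl i).left l * s (antipode (R := k) (f ((rr i).left j)))) ⊗ₜ[k]
          ((rl i).right l * s (antipode (R := k) (f ((rr i).right j)))) := by
    rw [gmap_apply_repr f s r, map_sum]
    refine Finset.sum_congr rfl fun i _ => ?_
    rw [Bialgebra.comul_mul]
    have h2 : comul (R := k) (s (antipode (R := k) (f (r.right i))))
        = ∑ j ∈ (rr i).index,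
            s (antipode (R := k) (f ((rr i).left j))) ⊗ₜ[k]
            s (antipode (R := k) (f ((rr i).right j))) := by
      rw [comul_bialgHom s, comul_antipode (hccB f s hcc hfs), comul_bialgHom f, ← (rr i).eq]
      simp only [map_sum, TensorProduct.map_tmul, BialgHom.coe_toLinearMap,
        CoalgHom.coe_toLinearMap]
      rfl
    rw [h2, ← (rl i).eq, Finset.sum_mul_sum]
    simp [Algebra.TensorProduct.tmul_mul_tmul]
  rw [hcg]
  simp only [map_sum, LinearMap.lTensor_tmul]
  have hfmul : ∀ (y : A) (c : B), f.toLinearMap (y * s (antipode (R := k) c))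
      = f y * antipode (R := k) c := by
    intro y c
    show f (y * s (antipode (R := k) c)) = _
    rw [map_mul, hfs]
  simp only [hfmul]
  set u : A →ₗ[k] A := s.toLinearMap ∘ₗ antipode k ∘ₗ f.toLinearMap with hu
  set mS : A ⊗[k] A →ₗ[k] A := LinearMap.mul' k A ∘ₗ LinearMap.lTensor A u with hmS
  set mT : A ⊗[k] A →ₗ[k] B :=
    LinearMap.mul' k B ∘ₗ TensorProduct.map f.toLinearMap (antipode k ∘ₗ f.toLinearMap) with hmT
  set Phi : A ⊗[k] (A ⊗[k] (A ⊗[k] A)) →ₗ[k] A ⊗[k] B :=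
    (TensorProduct.map mS mT) ∘ₗ (TensorProduct.assoc k A A (A ⊗[k] A)).symm.toLinearMap
    with hPhi
  have hPhi_tmul : ∀ x y z w : A, Phi (x ⊗ₜ[k] (y ⊗ₜ[k] (z ⊗ₜ[k] w)))
      = (x * s (antipode (R := k) (f y))) ⊗ₜ[k] (f z * antipode (R := k) (f w)) := by
    intro x y z w
    simp only [hPhi, hmS, hmT, hu, LinearMap.comp_apply, LinearEquiv.coe_coe,
      TensorProduct.assoc_symm_tmul, TensorProduct.map_tmul, LinearMap.lTensor_tmul,
      LinearMap.mul'_apply, BialgHom.coe_toLinearMap, CoalgHom.coe_toLinearMap]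
    rfl
  have hk := congrArg Phi (key hcc r rl rr)
  simp only [map_sum, hPhi_tmul] at hk
  rw [← hk]
  have inner : ∀ i ∈ r.index, ∀ l ∈ (rl i).index,
      (∑ j ∈ (rr i).index,
        ((rl i).left l * s (antipode (R := k) (f ((rl i).right l)))) ⊗ₜ[k]
          (f ((rr i).left j) * antipode (R := k) (f ((rr i).right j))))
      = counit (R := k) (r.right i) •
          (((rl i).left l * s (antipode (R := k) (f ((rl i).right l)))) ⊗ₜ[k] (1 : B)) := by
    intro i _ l _
    rw [← TensorProduct.tmul_sum, sum_f_mul_antipode f (rr i),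
      Algebra.algebraMap_eq_smul_one, TensorProduct.tmul_smul]
  rw [Finset.sum_congr rfl fun i hi => Finset.sum_congr rfl fun l hl => inner i hi l hl]
  have step : ∀ i ∈ r.index,
      (∑ l ∈ (rl i).index, counit (R := k) (r.right i) •
        (((rl i).left l * s (antipode (R := k) (f ((rl i).right l)))) ⊗ₜ[k] (1 : B)))
      = (counit (R := k) (r.right i) • gmap f s (r.left i)) ⊗ₜ[k] (1 : B) := by
    intro i _
    rw [← Finset.smul_sum, ← TensorProduct.sum_tmul, ← gmap_apply_repr f s (rl i),
      TensorProduct.smul_tmul']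
  rw [Finset.sum_congr rfl step, ← TensorProduct.sum_tmul]
  congr 1
  conv_rhs => rw [← sum_counit_smul_left r]
  rw [map_sum]
  simp only [map_smul]

lemma gmap_decomp (a : A) {ι : Type*} (r : Coalgebra.Repr k a ι) :
    ∑ i ∈ r.index, gmap f s (r.left i) * s (f (r.right i)) = a := by
  classical
  let rl : (i : r.ι) → Coalgebra.Repr k (r.left i) (A × A) := fun i => ℛ k _
  let rr : (i : r.ι) → Coalgebra.Repr k (r.right i) (A × A) := fun i => ℛ k _
  have E := sum_tmul_tmul_eq r rl rr
  set Om : A ⊗[k] (A ⊗[k] A) →ₗ[k] A :=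
    LinearMap.mul' k A ∘ₗ LinearMap.lTensor A (s.toLinearMap ∘ₗ LinearMap.mul' k B ∘ₗ
      TensorProduct.map (antipode k ∘ₗ f.toLinearMap) f.toLinearMap) with hOm
  have hOm_tmul : ∀ x y z : A, Om (x ⊗ₜ[k] (y ⊗ₜ[k] z))
      = x * s (antipode (R := k) (f y) * f z) := by
    intro x y z
    simp only [hOm, LinearMap.comp_apply, LinearMap.lTensor_tmul, TensorProduct.map_tmul,
      LinearMap.mul'_apply, BialgHom.coe_toLinearMap, CoalgHom.coe_toLinearMap]
    rfl
  have E2 := congrArg Om E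
  simp only [map_sum, hOm_tmul] at E2
  calc ∑ i ∈ r.index, gmap f s (r.left i) * s (f (r.right i))
      = ∑ i ∈ r.index, ∑ l ∈ (rl i).index,
          (rl i).left l * s (antipode (R := k) (f ((rl i).right l)) * f (r.right i)) := by
        refine Finset.sum_congr rfl fun i _ => ?_
        rw [gmap_apply_repr f s (rl i), Finset.sum_mul]
        refine Finset.sum_congr rfl fun l _ => ?_
        rw [mul_assoc, ← map_mul]
    _ = ∑ i ∈ r.index, ∑ j ∈ (rr i).index,
          r.left i * s (antipode (R := k) (f ((rr i).left j)) * f ((rr i).right j)) := E2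
    _ = a := by
        have step : ∀ i ∈ r.index, (∑ j ∈ (rr i).index,
            r.left i * s (antipode (R := k) (f ((rr i).left j)) * f ((rr i).right j)))
            = counit (R := k) (r.right i) • r.left i := by
          intro i _
          rw [← Finset.mul_sum, ← map_sum, sum_antipode_f_mul f (rr i),
            AlgHomClass.commutes]
          simp [Algebra.smul_def, ← Algebra.commutes]
        rw [Finset.sum_congr rfl step, sum_counit_smul_left r]

lemma psi_radford (hfs : ∀ b, f (s b) = b) {x : A} (hx : x ∈ hopfKer f) (b : B) :
    TensorProduct.map (gmap f s) f.toLinearMap (comul (R := k) (x * s b)) = x ⊗ₜ[k] b := by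
  classical
  let rx := ℛ k x
  let rxl : (i : rx.ι) → Coalgebra.Repr k (rx.left i) (A × A) := fun i => ℛ k _
  let rb := ℛ k b
  let rbl : (j : rb.ι) → Coalgebra.Repr k (rb.left j) (B × B) := fun j => ℛ k _
  have h0 : LinearMap.lTensor A f.toLinearMap (comul (R := k) x) = x ⊗ₜ[k] (1 : B) :=
    (mem_hopfKer_iff f).mp hx
  have h0e : ∑ i ∈ rx.index, rx.left i ⊗ₜ[k] f (rx.right i) = x ⊗ₜ[k] (1 : B) := by
    rw [← h0, ← rx.eq]
    simp only [map_sum, LinearMap.lTensor_tmul, BialgHom.coe_toLinearMap]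
    rfl
  -- the triple tensor identity coming from x being in the Hopf kernel
  have E2 : (∑ i ∈ rx.index, ∑ l ∈ (rxl i).index,
      ((rxl i).left l ⊗ₜ[k] f ((rxl i).right l)) ⊗ₜ[k] f (rx.right i))
      = (x ⊗ₜ[k] (1 : B)) ⊗ₜ[k] (1 : B) := by
    have E1 := congrArg
      (LinearMap.rTensor B (LinearMap.lTensor A f.toLinearMap ∘ₗ comul (R := k))) h0e
    simp only [map_sum, LinearMap.rTensor_tmul, LinearMap.comp_apply] at E1
    rw [h0] at E1
    rw [← E1]
    refine Finset.sum_congr rfl fun i _ => ?_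
    rw [← (rxl i).eq]
    simp only [map_sum, LinearMap.lTensor_tmul, TensorProduct.sum_tmul,
      BialgHom.coe_toLinearMap]
    rfl
  -- the linear map Θ
  let mu1 : (j : rb.ι) → (m : (rbl j).ι) → (A ⊗[k] B →ₗ[k] A) := fun j m =>
    LinearMap.mul' k A ∘ₗ TensorProduct.map
      (LinearMap.mulRight k (s ((rbl j).left m)))
      (s.toLinearMap ∘ₗ antipode k ∘ₗ LinearMap.mulRight k ((rbl j).right m))
  have hmu1 : ∀ j m (z : A) (c : B), mu1 j m (z ⊗ₜ[k] c)
      = (z * s ((rbl j).left m)) * s (antipode (R := k) (c * (rbl j).right m)) := by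
    intro j m z c
    simp only [mu1, LinearMap.comp_apply, TensorProduct.map_tmul, LinearMap.mul'_apply,
      LinearMap.mulRight_apply, BialgHom.coe_toLinearMap, CoalgHom.coe_toLinearMap]
    rfl
  let Theta : (A ⊗[k] B) ⊗[k] B →ₗ[k] A ⊗[k] B :=
    ∑ j ∈ rb.index, ∑ m ∈ (rbl j).index,
      TensorProduct.map (mu1 j m) (LinearMap.mulRight k (rb.right j))
  have E3 := congrArg Theta E2
  -- evaluate Theta on the right-hand side
  have hRHS : Theta ((x ⊗ₜ[k] (1 : B)) ⊗ₜ[k] (1 : B)) = x ⊗ₜ[k] b := by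
    simp only [Theta, LinearMap.sum_apply, TensorProduct.map_tmul, hmu1,
      LinearMap.mulRight_apply, one_mul]
    have hj : ∀ j ∈ rb.index, (∑ m ∈ (rbl j).index,
        ((x * s ((rbl j).left m)) * s (antipode (R := k) ((rbl j).right m)))
          ⊗ₜ[k] (rb.right j))
        = (counit (R := k) (rb.left j) • x) ⊗ₜ[k] rb.right j := by
      intro j _
      rw [← TensorProduct.sum_tmul]
      congr 1
      have : ∀ m ∈ (rbl j).index,
          (x * s ((rbl j).left m)) * s (antipode (R := k) ((rbl j).right m))
          = x * s ((rbl j).left m * antipode (R := k) ((rbl j).right m)) := by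
        intro m _
        rw [mul_assoc, ← map_mul]
      rw [Finset.sum_congr rfl this, ← Finset.mul_sum, ← map_sum,
        sum_mul_antipode_eq_algebraMap_counit (rbl j), AlgHomClass.commutes]
      simp [Algebra.smul_def, ← Algebra.commutes]
    rw [Finset.sum_congr rfl hj]
    have : ∀ j ∈ rb.index, (counit (R := k) (rb.left j) • x) ⊗ₜ[k] rb.right j
        = x ⊗ₜ[k] (counit (R := k) (rb.left j) • rb.right j) := by
      intro j _
      rw [TensorProduct.smul_tmul]
    rw [Finset.sum_congr rfl this, ← TensorProduct.tmul_sum, sum_counit_smul_right rb]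
  -- evaluate Theta on the left-hand side : it gives the desired expression
  rw [hRHS] at E3
  rw [← E3]
  -- finally, compute map (gmap) f (comul (x * s b)) and match
  have hcsb : comul (R := k) (s b) = ∑ j ∈ rb.index, s (rb.left j) ⊗ₜ[k] s (rb.right j) := by
    rw [comul_bialgHom s, ← rb.eq]
    simp only [map_sum, TensorProduct.map_tmul, BialgHom.coe_toLinearMap,
      CoalgHom.coe_toLinearMap]
    rfl
  have hcomul : comul (R := k) (x * s b) = ∑ i ∈ rx.index, ∑ j ∈ rb.index,
      (rx.left i * s (rb.left j)) ⊗ₜ[k] (rx.right i * s (rb.right j)) := by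
    rw [Bialgebra.comul_mul, hcsb, ← rx.eq, Finset.sum_mul_sum]
    simp [Algebra.TensorProduct.tmul_mul_tmul]
  rw [hcomul, map_sum]
  simp only [map_sum, TensorProduct.map_tmul]
  -- expand gmap on each product
  have hgm : ∀ i j, gmap f s (rx.left i * s (rb.left j))
      = ∑ l ∈ (rxl i).index, ∑ m ∈ (rbl j).index,
          ((rxl i).left l * s ((rbl j).left m)) *
            s (antipode (R := k) (f ((rxl i).right l) * (rbl j).right m)) := by
    intro i j
    have hc : comul (R := k) (rx.left i * s (rb.left j))
        = ∑ l ∈ (rxl i).index, ∑ m ∈ (rbl j).index,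
            ((rxl i).left l * s ((rbl j).left m)) ⊗ₜ[k]
              ((rxl i).right l * s ((rbl j).right m)) := by
      rw [Bialgebra.comul_mul, comul_bialgHom s, ← (rbl j).eq, map_sum]
      simp only [TensorProduct.map_tmul]
      rw [← (rxl i).eq, Finset.sum_mul_sum]
      simp only [Algebra.TensorProduct.tmul_mul_tmul, BialgHom.coe_toLinearMap,
        CoalgHom.coe_toLinearMap]
      rfl
    rw [gmap, LinearMap.comp_apply, LinearMap.comp_apply, hc]
    simp only [map_sum, LinearMap.lTensor_tmul, LinearMap.mul'_apply, LinearMap.comp_apply]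
    refine Finset.sum_congr rfl fun l _ => Finset.sum_congr rfl fun m _ => ?_
    show _ * s (antipode (R := k) (f ((rxl i).right l * s ((rbl j).right m)))) = _
    rw [map_mul, hfs]
  have hfm : ∀ i j, f.toLinearMap (rx.right i * s (rb.right j)) = f (rx.right i) * rb.right j := by
    intro i j
    show f (rx.right i * s (rb.right j)) = _
    rw [map_mul, hfs]
  simp only [hgm, hfm]
  have hTheta : ∀ i ∈ rx.index, ∀ l ∈ (rxl i).index,
      Theta ((((rxl i).left l) ⊗ₜ[k] f ((rxl i).right l)) ⊗ₜ[k] f (rx.right i))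
      = ∑ j ∈ rb.index, ∑ m ∈ (rbl j).index,
        (((rxl i).left l * s ((rbl j).left m)) *
          s (antipode (R := k) (f ((rxl i).right l) * (rbl j).right m))) ⊗ₜ[k]
        (f (rx.right i) * rb.right j) := by
    intro i _ l _
    simp only [Theta, LinearMap.sum_apply, TensorProduct.map_tmul, hmu1,
      LinearMap.mulRight_apply]
  rw [Finset.sum_congr rfl fun i hi => Finset.sum_congr rfl fun l hl => hTheta i hi l hl]
  have lhs_eq : ∀ i ∈ rx.index, ∀ j ∈ rb.index,
      ((∑ l ∈ (rxl i).index, ∑ m ∈ (rbl j).index,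
        ((rxl i).left l * s ((rbl j).left m)) *
          s (antipode (R := k) (f ((rxl i).right l) * (rbl j).right m))) ⊗ₜ[k]
        (f (rx.right i) * rb.right j))
      = ∑ l ∈ (rxl i).index, ∑ m ∈ (rbl j).index,
        (((rxl i).left l * s ((rbl j).left m)) *
          s (antipode (R := k) (f ((rxl i).right l) * (rbl j).right m))) ⊗ₜ[k]
        (f (rx.right i) * rb.right j) := by
    intro i _ j _
    rw [TensorProduct.sum_tmul]
    exact Finset.sum_congr rfl fun l _ => TensorProduct.sum_tmul _ _ _
  rw [Finset.sum_congr rfl fun i hi => Finset.sum_congr rfl fun j hj => lhs_eq i hi j hj]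
  exact Finset.sum_congr rfl fun i _ => Finset.sum_comm

end Main
end RadfordAux

open RadfordAux Coalgebra HopfAlgebra

/-- Let `A` be a cocommutative Hopf algebra over a field `k`, and let
`f : A → B` be a Hopf algebra morphism admitting a Hopf algebra section `s`
(`f ∘ s = id`).  Then `Hker f ⊗ B → A`, `x ⊗ b ↦ x * s b`, is a linear isomorphism. -/
theorem radfordMap_bijective
    (hcc : ∀ a : A, TensorProduct.comm k A A (Coalgebra.comul a) = Coalgebra.comul a)
    (f : A →ₐc[k] B) (s : B →ₐc[k] A) (hfs : ∀ b, f (s b) = b) :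
    Function.Bijective (radfordMap f s) := by
  classical
  have hmem := gmap_mem_hopfKer f s hcc hfs
  have hradford_tmul : ∀ (x : hopfKer f) (b : B),
      radfordMap f s (x ⊗ₜ[k] b) = (x : A) * s b := by
    intro x b
    simp [radfordMap]
  constructor
  · -- injectivity via the explicit inverse
    set G' : A →ₗ[k] hopfKer f := (gmap f s).codRestrict (hopfKer f) hmem with hG'
    set Psi : A →ₗ[k] hopfKer f ⊗[k] B :=
      (TensorProduct.map G' f.toLinearMap) ∘ₗ comul with hPsi
    have hinj : Function.Injective (LinearMap.rTensor B (hopfKer f).subtype) :=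
      Module.Flat.rTensor_preserves_injective_linearMap _ (Submodule.injective_subtype _)
    have hcomp : (LinearMap.rTensor B (hopfKer f).subtype) ∘ₗ
        (TensorProduct.map G' f.toLinearMap) = TensorProduct.map (gmap f s) f.toLinearMap := by
      apply TensorProduct.ext'
      intro z w
      simp [hG', LinearMap.rTensor_tmul]
    have hleft : ∀ t : hopfKer f ⊗[k] B, Psi (radfordMap f s t) = t := by
      intro t
      induction t using TensorProduct.induction_on with
      | zero => simp
      | tmul x b =>
        apply hinj
        have h1 : (LinearMap.rTensor B (hopfKer f).subtype) (Psi (radfordMap f s (x ⊗ₜ[k] b)))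
            = TensorProduct.map (gmap f s) f.toLinearMap (comul (R := k) ((x : A) * s b)) := by
          rw [hradford_tmul, hPsi, LinearMap.comp_apply, ← LinearMap.comp_apply
            (LinearMap.rTensor B (hopfKer f).subtype), hcomp]
        rw [h1, psi_radford f s hfs x.2 b]
        simp [LinearMap.rTensor_tmul]
      | add u v hu hv =>
        rw [map_add, map_add, hu, hv]
    exact Function.LeftInverse.injective hleft
  · -- surjectivity
    intro a
    let r := ℛ k a
    refine ⟨∑ i ∈ r.index, (⟨gmap f s (r.left i), hmem _⟩ : hopfKer f) ⊗ₜ[k] f (r.right i), ?_⟩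
    rw [map_sum]
    rw [Finset.sum_congr rfl fun i _ => hradford_tmul _ _]
    exact gmap_decomp f s a r
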